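/- Let m be a positive integer and c, e ∈ ℝ^m. Let S = {d ∈ ℝ : for every index i, c i * d + e i ≥ 0}. Suppose S is nonempty and there exists an index i with c i < 0. Then S is bounded above, its supremum equals the minimum of -e i / c i taken over all indices i with c i < 0, and this supremum belongs to S (so it is the maximal feasible value of the parameter d). -/
import Mathlib


theorem stmt_2 (m : ℕ) (hm : 0 < m) (c e : Fin m → ℝ)
    (S : Set ℝ) (hS : S = {d : ℝ | ∀ i, 0 ≤ c i * d + e i})
    (hne : S.Nonempty) (hneg : ∃ i, c i < 0) :
    BddAbove S ∧
    sSup S = sInf {r : ℝ | ∃ i, c i < 0 ∧ r = -e i / c i} ∧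
    sSup S ∈ S := by
  set T : Set ℝ := {r : ℝ | ∃ i, c i < 0 ∧ r = -e i / c i} with hT
  have hTsub : T ⊆ (fun i => -e i / c i) '' Set.univ := by
    rintro r ⟨i, hi, rfl⟩; exact ⟨i, trivial, rfl⟩
  have hTfin : T.Finite := ((Set.finite_univ.image _).subset hTsub)
  obtain ⟨i0, hi0⟩ := hneg
  have hTne : T.Nonempty := ⟨-e i0 / c i0, i0, hi0, rfl⟩
  set d : ℝ := sInf T with hd
  have hdT : d ∈ T := hTne.csInf_mem hTfin
  have hd_le : ∀ r ∈ T, d ≤ r := fun r hr => csInf_le hTfin.bddBelow hr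
  -- key equivalence: for c i < 0, 0 ≤ c i * x + e i ↔ x ≤ -e i / c i
  have key : ∀ i, c i < 0 → ∀ x : ℝ, (0 ≤ c i * x + e i ↔ x ≤ -e i / c i) := by
    intro i hi x
    rw [le_div_iff_of_neg hi]
    constructor <;> intro h <;> nlinarith
  have hub : ∀ x ∈ S, x ≤ d := by
    intro x hx
    rw [hS] at hx
    obtain ⟨j, hj, hdj⟩ := hdT
    rw [hdj, ← key j hj x]
    exact hx j
  have hdS : d ∈ S := by
    obtain ⟨x0, hx0⟩ := hne
    have hx0d : x0 ≤ d := hub x0 hx0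
    rw [hS] at hx0 ⊢
    intro i
    rcases lt_or_ge (c i) 0 with h | h
    · exact (key i h d).2 (hd_le _ ⟨i, h, rfl⟩)
    · have := hx0 i
      nlinarith
  have hbdd : BddAbove S := ⟨d, hub⟩
  have hsup : sSup S = d := le_antisymm (csSup_le hne hub) (le_csSup hbdd hdS)
  exact ⟨hbdd, hsup, hsup ▸ hdS⟩
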